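/- Let E ⊆ F_2^r \ {0} be triangle-free and I_5-free, and let F be a 4-dimensional subspace of F_2^r such that E ∩ F is an induced 5-circuit (five distinct vectors x_1,...,x_5 with x_1+...+x_5 = 0, any four linearly independent, and E ∩ F = {x_1,...,x_5}). Then the contraction of E by F is I_3-free: there do not exist three cosets A_1, A_2, A_3 of F in F_2^r, each meeting E, such that A_1, A_2, A_3 are linearly independent in the quotient F_2^r / F and no coset of F corresponding to a nonzero sum of two or three of the classes A_1, A_2, A_3 in the quotient meets E. -/

import Mathlib

open Submodule

abbrev V2 (r : ℕ) := Fin r → ZMod 2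

def TriangleFree {r : ℕ} (E : Set (V2 r)) : Prop :=
  ∀ a ∈ E, ∀ b ∈ E, a + b ∉ E

def IFree {r : ℕ} (n : ℕ) (E : Set (V2 r)) : Prop :=
  ¬ ∃ S : Finset (V2 r), S.card = n ∧
      LinearIndependent (ZMod 2) (Subtype.val : ↥(S : Set (V2 r)) → V2 r) ∧
      E ∩ (span (ZMod 2) (S : Set (V2 r)) : Set (V2 r)) = (S : Set (V2 r))

def IFreeG (n : ℕ) {W : Type*} [AddCommGroup W] [Module (ZMod 2) W] (E : Set W) : Prop :=
  ¬ ∃ S : Finset W, S.card = n ∧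
      LinearIndependent (ZMod 2) (Subtype.val : ↥(S : Set W) → W) ∧
      E ∩ (span (ZMod 2) (S : Set W) : Set W) = (S : Set W)

lemma zm2 (a : ZMod 2) : a = 0 ∨ a = 1 := by revert a; decide

lemma v2_add_self {r : ℕ} (v : V2 r) : v + v = 0 := by
  funext i; exact CharTwo.add_self_eq_zero _

lemma v2_eq_of_add_eq_zero {r : ℕ} {u w : V2 r} (h : u + w = 0) : u = w := by
  have h2 : u + w + w = w := by rw [h, zero_add]
  rwa [add_assoc, v2_add_self, add_zero] at h2

lemma q_add_self {r : ℕ} {F : Submodule (ZMod 2) (V2 r)} (q : V2 r ⧸ F) : q + q = 0 := by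
  obtain ⟨v, rfl⟩ := F.mkQ_surjective q
  rw [← map_add, v2_add_self, map_zero]

lemma mkQ_eq_zero {r : ℕ} {F : Submodule (ZMod 2) (V2 r)} {v : V2 r} (h : v ∈ F) :
    F.mkQ v = 0 := by
  rwa [Submodule.mkQ_apply, Submodule.Quotient.mk_eq_zero]

/-- `d` is a "bad shift" for the fiber over `t`. -/
def Bd {r : ℕ} (E : Set (V2 r)) (F : Submodule (ZMod 2) (V2 r)) (t : V2 r ⧸ F)
    (d : V2 r) : Prop :=
  d ∈ F ∧ ∀ e, e ∈ E → F.mkQ e = t → e + d ∈ E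

lemma Bd.addc {r : ℕ} {E : Set (V2 r)} {F : Submodule (ZMod 2) (V2 r)} {t : V2 r ⧸ F}
    {d d' : V2 r} (h : Bd E F t d) (h' : Bd E F t d') : Bd E F t (d + d') := by
  refine ⟨F.add_mem h.1 h'.1, fun e he ht => ?_⟩
  have h1 : e + d ∈ E := h.2 e he ht
  have h2 : F.mkQ (e + d) = t := by rw [map_add, mkQ_eq_zero h.1, add_zero, ht]
  have h3 := h'.2 (e + d) h1 h2
  rwa [add_assoc] at h3

lemma card_triple_le {α : Type*} [DecidableEq α] (A B C : α) :
    ({A, B, C} : Finset α).card ≤ 3 := by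
  apply le_trans (Finset.card_insert_le _ _)
  have := Finset.card_insert_le B ({C} : Finset α)
  simp at this ⊢
  omega

lemma inj3 {α : Type*} {a b c : α} (h12 : a ≠ b) (h13 : a ≠ c) (h23 : b ≠ c) :
    Function.Injective ![a, b, c] := by
  intro i j h
  fin_cases i <;> fin_cases j <;> simp_all

lemma range3 {α : Type*} (a b c : α) : Set.range ![a, b, c] = {a, b, c} := by
  ext w
  simp only [Set.mem_range, Set.mem_insert_iff, Set.mem_singleton_iff]
  constructor
  · rintro ⟨i, rfl⟩
    fin_cases i <;> simp
  · rintro (rfl | rfl | rfl)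
    exacts [⟨0, rfl⟩, ⟨1, rfl⟩, ⟨2, rfl⟩]

lemma range5 {α : Type*} (a b c d e : α) :
    Set.range ![a, b, c, d, e] = {a, b, c, d, e} := by
  ext w
  simp only [Set.mem_range, Set.mem_insert_iff, Set.mem_singleton_iff]
  constructor
  · rintro ⟨i, rfl⟩
    fin_cases i <;> simp
  · rintro (rfl | rfl | rfl | rfl | rfl)
    exacts [⟨0, rfl⟩, ⟨1, rfl⟩, ⟨2, rfl⟩, ⟨3, rfl⟩, ⟨4, rfl⟩]

set_option maxHeartbeats 1600000 in
theorem stmt13 {r : ℕ} (E : Set (V2 r)) (h0 : (0 : V2 r) ∉ E)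
    (hTF : TriangleFree E) (hI5 : IFree 5 E)
    (F : Submodule (ZMod 2) (V2 r)) (hF : Module.finrank (ZMod 2) F = 4)
    (S : Finset (V2 r)) (hS5 : S.card = 5) (hSF : (S : Set (V2 r)) ⊆ (F : Set (V2 r)))
    (hsum : (∑ x ∈ S, x) = 0)
    (hind : ∀ T ⊆ S, T.card = 4 →
      LinearIndependent (ZMod 2) (Subtype.val : ↥(T : Set (V2 r)) → V2 r))
    (hEF : E ∩ (F : Set (V2 r)) = (S : Set (V2 r))) :
    IFreeG 3 ((⇑F.mkQ '' E) \ {0}) := by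
  classical
  rintro ⟨T, hT3, hTind, hTeq⟩
  obtain ⟨t1, t2, t3, h12, h13, h23, rfl⟩ := Finset.card_eq_three.mp hT3
  -- basic membership facts
  have hSE : ∀ s ∈ S, s ∈ E := by
    intro s hs
    have h' : s ∈ E ∩ (F : Set (V2 r)) := by
      rw [hEF]; exact Finset.mem_coe.mpr hs
    exact h'.1
  have hTsub : ∀ t ∈ ({t1, t2, t3} : Finset (V2 r ⧸ F)),
      (∃ e ∈ E, F.mkQ e = t) ∧ t ≠ 0 := by
    intro t ht
    have h'' : t ∈ (({t1, t2, t3} : Finset (V2 r ⧸ F)) : Set (V2 r ⧸ F)) :=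
      Finset.mem_coe.mpr ht
    rw [← hTeq] at h''
    exact ⟨h''.1.1, h''.1.2⟩
  -- no element of E maps to a q in the span that is neither 0 nor in T
  have hnot : ∀ q : V2 r ⧸ F,
      q ∈ span (ZMod 2) (({t1, t2, t3} : Finset (V2 r ⧸ F)) : Set (V2 r ⧸ F)) →
      q ∉ ({t1, t2, t3} : Finset (V2 r ⧸ F)) → q ≠ 0 → ∀ e ∈ E, F.mkQ e ≠ q := by
    intro q hsp hqT hq0 e he heq
    have h' : q ∈ (({t1, t2, t3} : Finset (V2 r ⧸ F)) : Set (V2 r ⧸ F)) := by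
      rw [← hTeq]
      exact ⟨⟨⟨e, he, heq⟩, hq0⟩, hsp⟩
    exact hqT (Finset.mem_coe.mp h')
  -- no shift by an element of S is bad
  have hBdS : ∀ t ∈ ({t1, t2, t3} : Finset (V2 r ⧸ F)), ∀ z ∈ S, ¬ Bd E F t z := by
    intro t ht z hz hbd
    obtain ⟨⟨e, he, het⟩, -⟩ := hTsub t ht
    exact hTF e he z (hSE z hz) (hbd.2 e he het)
  -- two "disjoint" bad pairs are impossible
  have hdisj4 : ∀ t ∈ ({t1, t2, t3} : Finset (V2 r ⧸ F)), ∀ a b c d : V2 r,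
      a ∈ S → b ∈ S → c ∈ S → d ∈ S →
      a ≠ b → a ≠ c → a ≠ d → b ≠ c → b ≠ d → c ≠ d →
      Bd E F t (a + b) → Bd E F t (c + d) → False := by
    intro t ht a b c d ha hb hc hd hab hac had hbc hbd hcd h1 h2
    have hsub : ({a, b, c, d} : Finset (V2 r)) ⊆ S := by
      intro u hu
      simp only [Finset.mem_insert, Finset.mem_singleton] at hu
      rcases hu with rfl | rfl | rfl | rfl <;> assumption
    have hcard : ({a, b, c, d} : Finset (V2 r)).card = 4 := by
      rw [Finset.card_insert_of_notMem (by simp [hab, hac, had]),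
        Finset.card_insert_of_notMem (by simp [hbc, hbd]),
        Finset.card_insert_of_notMem (by simp [hcd]), Finset.card_singleton]
    have hR : (S \ {a, b, c, d}).card = 1 := by
      rw [Finset.card_sdiff_of_subset hsub, hcard, hS5]
    obtain ⟨z, hzR⟩ := Finset.card_eq_one.mp hR
    have hzS : z ∈ S := by
      have hz' : z ∈ S \ {a, b, c, d} := hzR ▸ Finset.mem_singleton_self z
      exact (Finset.mem_sdiff.mp hz').1
    have hsum2 : (∑ x ∈ S \ {a, b, c, d}, x) + (∑ x ∈ ({a, b, c, d} : Finset (V2 r)), x)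
        = ∑ x ∈ S, x := Finset.sum_sdiff hsub
    rw [hzR, Finset.sum_singleton, hsum] at hsum2
    have hsum3 : (∑ x ∈ ({a, b, c, d} : Finset (V2 r)), x) = a + b + (c + d) := by
      rw [Finset.sum_insert (by simp [hab, hac, had]),
        Finset.sum_insert (by simp [hbc, hbd]),
        Finset.sum_insert (by simp [hcd]), Finset.sum_singleton]
      abel
    have hz : z = a + b + (c + d) := by
      rw [← hsum3]; exact v2_eq_of_add_eq_zero hsum2
    exact hBdS t ht z hzS (hz ▸ h1.addc h2)
  -- the set of bad pairs for each t has at most 3 elements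
  have hBcard : ∀ t ∈ ({t1, t2, t3} : Finset (V2 r ⧸ F)),
      ((S.powersetCard 2).filter (fun p => Bd E F t (∑ v ∈ p, v))).card ≤ 3 := by
    intro t ht
    by_contra hB
    push_neg at hB
    have key : ∀ p ∈ (S.powersetCard 2).filter (fun p => Bd E F t (∑ v ∈ p, v)),
        p ⊆ S ∧ p.card = 2 ∧ Bd E F t (∑ v ∈ p, v) := by
      intro p hp
      rcases Finset.mem_filter.mp hp with ⟨hp', hbd⟩
      rcases Finset.mem_powersetCard.mp hp' with ⟨hsub, hc⟩
      exact ⟨hsub, hc, hbd⟩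
    have h1lt : 1 < ((S.powersetCard 2).filter (fun p => Bd E F t (∑ v ∈ p, v))).card := by
      omega
    obtain ⟨p1, hp1, p2, hp2, hpne⟩ := Finset.one_lt_card.mp h1lt
    obtain ⟨hp1S, hp1c, hbd1⟩ := key p1 hp1
    obtain ⟨hp2S, hp2c, hbd2⟩ := key p2 hp2
    obtain ⟨u1, v1, huv1, rfl⟩ := Finset.card_eq_two.mp hp1c
    obtain ⟨u2, v2, huv2, rfl⟩ := Finset.card_eq_two.mp hp2c
    rw [Finset.sum_pair huv1] at hbd1
    rw [Finset.sum_pair huv2] at hbd2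
    have hu1S : u1 ∈ S := hp1S (by simp)
    have hv1S : v1 ∈ S := hp1S (by simp)
    have hu2S : u2 ∈ S := hp2S (by simp)
    have hv2S : v2 ∈ S := hp2S (by simp)
    -- main subset claim
    have main : ∀ a x y : V2 r, a ∈ S → x ∈ S → y ∈ S → a ≠ x → a ≠ y → x ≠ y →
        Bd E F t (a + x) → Bd E F t (a + y) →
        (S.powersetCard 2).filter (fun p => Bd E F t (∑ v ∈ p, v)) ⊆
          {({a, x} : Finset (V2 r)), {a, y}, {x, y}} := by
      intro a x y haS hxS hyS hax hay hxy hb1 hb2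
      have hbxy : Bd E F t (x + y) := by
        have heq : a + x + (a + y) = x + y := by
          have h' : a + x + (a + y) = a + a + (x + y) := by abel
          rw [h', v2_add_self, zero_add]
        have := hb1.addc hb2
        rwa [heq] at this
      intro p hp
      obtain ⟨hpS, hpc, hbd⟩ := key p hp
      obtain ⟨u, v, huv, rfl⟩ := Finset.card_eq_two.mp hpc
      rw [Finset.sum_pair huv] at hbd
      have huS : u ∈ S := hpS (by simp)
      have hvS : v ∈ S := hpS (by simp)
      simp only [Finset.mem_insert, Finset.mem_singleton]
      have hmeet : u = x ∨ u = y ∨ v = x ∨ v = y := by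
        by_contra hcon
        push_neg at hcon
        exact hdisj4 t ht u v x y huS hvS hxS hyS huv hcon.1 hcon.2.1 hcon.2.2.1
          hcon.2.2.2 hxy hbd hbxy
      have hmeet1 : u = a ∨ u = x ∨ v = a ∨ v = x := by
        by_contra hcon
        push_neg at hcon
        exact hdisj4 t ht u v a x huS hvS haS hxS huv hcon.1 hcon.2.1 hcon.2.2.1
          hcon.2.2.2 hax hbd hb1
      have hmeet2 : u = a ∨ u = y ∨ v = a ∨ v = y := by
        by_contra hcon
        push_neg at hcon
        exact hdisj4 t ht u v a y huS hvS haS hyS huv hcon.1 hcon.2.1 hcon.2.2.1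
          hcon.2.2.2 hay hbd hb2
      rcases hmeet with rfl | rfl | rfl | rfl
      · -- u = x
        rcases hmeet2 with rfl | rfl | rfl | rfl
        · exact absurd rfl hax
        · exact absurd rfl hxy
        · exact Or.inl (Finset.pair_comm _ _)
        · exact Or.inr (Or.inr rfl)
      · -- u = y
        rcases hmeet1 with rfl | rfl | rfl | rfl
        · exact absurd rfl hay
        · exact absurd rfl (Ne.symm hxy)
        · exact Or.inr (Or.inl (Finset.pair_comm _ _))
        · exact Or.inr (Or.inr (Finset.pair_comm _ _))
      · -- v = x
        rcases hmeet2 with rfl | rfl | rfl | rfl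
        · exact Or.inl rfl
        · exact Or.inr (Or.inr (Finset.pair_comm _ _))
        · exact absurd rfl hax
        · exact absurd rfl hxy
      · -- v = y
        rcases hmeet1 with rfl | rfl | rfl | rfl
        · exact Or.inr (Or.inl rfl)
        · exact Or.inr (Or.inr rfl)
        · exact absurd rfl hay
        · exact absurd rfl (Ne.symm hxy)
    -- find a common element of p1 and p2
    have hdisj : u1 = u2 ∨ u1 = v2 ∨ v1 = u2 ∨ v1 = v2 := by
      by_contra hcon
      push_neg at hcon
      exact hdisj4 t ht u1 v1 u2 v2 hu1S hv1S hu2S hv2S huv1 hcon.1 hcon.2.1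
        hcon.2.2.1 hcon.2.2.2 huv2 hbd1 hbd2
    have hle3 : ((S.powersetCard 2).filter (fun p => Bd E F t (∑ v ∈ p, v))).card ≤ 3 := by
      rcases hdisj with rfl | rfl | rfl | rfl
      · -- u1 = u2 =: a
        have hne : v1 ≠ v2 := by
          intro h; subst h; exact hpne rfl
        exact le_trans (Finset.card_le_card
          (main u1 v1 v2 hu1S hv1S hv2S huv1 huv2 hne hbd1 hbd2)) (card_triple_le _ _ _)
      · -- u1 = v2 =: a
        have hau2 : u1 ≠ u2 := fun h => huv2 (h.symm)
        have hne : v1 ≠ u2 := by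
          intro h; subst h
          exact hpne (Finset.pair_comm _ _)
        have hb2' : Bd E F t (u1 + u2) := by rwa [add_comm] at hbd2
        exact le_trans (Finset.card_le_card
          (main u1 v1 u2 hu1S hv1S hu2S huv1 hau2 hne hbd1 hb2')) (card_triple_le _ _ _)
      · -- v1 = u2 =: a
        have hav1 : v1 ≠ u1 := Ne.symm huv1
        have hne : u1 ≠ v2 := by
          intro h; subst h
          exact hpne (Finset.pair_comm _ _)
        have hb1' : Bd E F t (v1 + u1) := by rwa [add_comm] at hbd1
        exact le_trans (Finset.card_le_card
          (main v1 u1 v2 hu2S hu1S hv2S hav1 huv2 hne hb1' hbd2)) (card_triple_le _ _ _)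
      · -- v1 = v2 =: a
        have hav1 : v1 ≠ u1 := Ne.symm huv1
        have hav2 : v1 ≠ u2 := Ne.symm huv2
        have hne : u1 ≠ u2 := by
          intro h; subst h; exact hpne rfl
        have hb1' : Bd E F t (v1 + u1) := by rwa [add_comm] at hbd1
        have hb2' : Bd E F t (v1 + u2) := by rwa [add_comm] at hbd2
        exact le_trans (Finset.card_le_card
          (main v1 u1 u2 hv1S hu1S hu2S hav1 hav2 hne hb1' hb2')) (card_triple_le _ _ _)
    omega
  -- find a good pair
  have hPcard : (S.powersetCard 2).card = 10 := by
    rw [Finset.card_powersetCard, hS5]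
    decide
  have hex : ∃ p ∈ S.powersetCard 2,
      p ∉ ((S.powersetCard 2).filter (fun p => Bd E F t1 (∑ v ∈ p, v)))
        ∪ ((S.powersetCard 2).filter (fun p => Bd E F t2 (∑ v ∈ p, v)))
        ∪ ((S.powersetCard 2).filter (fun p => Bd E F t3 (∑ v ∈ p, v))) := by
    by_contra hcon
    push_neg at hcon
    have hsub : S.powersetCard 2 ⊆ _ := hcon
    have hc1 := Finset.card_le_card hsub
    have hc2 := Finset.card_union_le
      (((S.powersetCard 2).filter (fun p => Bd E F t1 (∑ v ∈ p, v)))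
        ∪ ((S.powersetCard 2).filter (fun p => Bd E F t2 (∑ v ∈ p, v))))
      ((S.powersetCard 2).filter (fun p => Bd E F t3 (∑ v ∈ p, v)))
    have hc3 := Finset.card_union_le
      ((S.powersetCard 2).filter (fun p => Bd E F t1 (∑ v ∈ p, v)))
      ((S.powersetCard 2).filter (fun p => Bd E F t2 (∑ v ∈ p, v)))
    have hb1 := hBcard t1 (by simp)
    have hb2 := hBcard t2 (by simp)
    have hb3 := hBcard t3 (by simp)
    omega
  obtain ⟨p, hpP, hpB⟩ := hex
  rcases Finset.mem_powersetCard.mp hpP with ⟨hpS, hpc⟩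
  obtain ⟨x, y, hxy, rfl⟩ := Finset.card_eq_two.mp hpc
  have hxS : x ∈ S := hpS (by simp)
  have hyS : y ∈ S := hpS (by simp)
  have hxF : x ∈ F := hSF (Finset.mem_coe.mpr hxS)
  have hyF : y ∈ F := hSF (Finset.mem_coe.mpr hyS)
  have hxyF : x + y ∈ F := F.add_mem hxF hyF
  simp only [Finset.mem_union, not_or] at hpB
  have hgood : ∀ t ∈ ({t1, t2, t3} : Finset (V2 r ⧸ F)),
      ∃ e, e ∈ E ∧ F.mkQ e = t ∧ e + (x + y) ∉ E := by
    intro t ht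
    have hnb : ¬ Bd E F t (x + y) := by
      intro hb
      have hmem : {x, y} ∈ (S.powersetCard 2).filter (fun p => Bd E F t (∑ v ∈ p, v)) := by
        rw [Finset.mem_filter, Finset.sum_pair hxy]
        exact ⟨hpP, hb⟩
      simp only [Finset.mem_insert, Finset.mem_singleton] at ht
      rcases ht with rfl | rfl | rfl
      · exact hpB.1.1 hmem
      · exact hpB.1.2 hmem
      · exact hpB.2 hmem
    rw [Bd, not_and] at hnb
    have hnb2 := hnb hxyF
    push_neg at hnb2
    obtain ⟨e, he, het, hexy⟩ := hnb2
    exact ⟨e, he, het, hexy⟩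
  obtain ⟨e1, he1E, he1t, he1xy⟩ := hgood t1 (by simp)
  obtain ⟨e2, he2E, he2t, he2xy⟩ := hgood t2 (by simp)
  obtain ⟨e3, he3E, he3t, he3xy⟩ := hgood t3 (by simp)
  -- simple derived facts
  have hmkx : F.mkQ x = 0 := mkQ_eq_zero hxF
  have hmky : F.mkQ y = 0 := mkQ_eq_zero hyF
  have hxE : x ∈ E := hSE x hxS
  have hyE : y ∈ E := hSE y hyS
  have ht1ne : t1 ≠ 0 := (hTsub t1 (by simp)).2
  have ht2ne : t2 ≠ 0 := (hTsub t2 (by simp)).2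
  have ht3ne : t3 ≠ 0 := (hTsub t3 (by simp)).2
  have hxne0 : x ≠ 0 := fun h => h0 (h ▸ hxE)
  have hyne0 : y ≠ 0 := fun h => h0 (h ▸ hyE)
  -- coefficient form of the independence of t1,t2,t3
  have hTcoe : (({t1, t2, t3} : Finset (V2 r ⧸ F)) : Set (V2 r ⧸ F))
      = Set.range ![t1, t2, t3] := by
    rw [range3]; simp
  have hvinj : Function.Injective ![t1, t2, t3] := inj3 h12 h13 h23
  have hTind2 : LinearIndependent (ZMod 2)
      (Subtype.val : ↥(Set.range ![t1, t2, t3]) → V2 r ⧸ F) := by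
    rw [← hTcoe]; exact hTind
  have hTind' : LinearIndependent (ZMod 2) ![t1, t2, t3] :=
    (linearIndepOn_id_range_iff hvinj).mp hTind2
  have tc : ∀ a b c : ZMod 2, a • t1 + b • t2 + c • t3 = 0 → a = 0 ∧ b = 0 ∧ c = 0 := by
    intro a b c h
    have h' : ∑ i, (![a, b, c]) i • (![t1, t2, t3]) i = 0 := by
      rw [Fin.sum_univ_three]; simpa using h
    have h'' := Fintype.linearIndependent_iff.mp hTind' ![a, b, c] h'
    exact ⟨h'' 0, h'' 1, h'' 2⟩
  -- no element of E can map to a combination with at least two nonzero coefficients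
  have tcontra : ∀ a b c : ZMod 2, ((a = 1 ∧ b = 1) ∨ (a = 1 ∧ c = 1) ∨ (b = 1 ∧ c = 1)) →
      ∀ e ∈ E, F.mkQ e ≠ a • t1 + b • t2 + c • t3 := by
    intro a b c habc e he heq
    have hspan : a • t1 + b • t2 + c • t3 ∈
        span (ZMod 2) (({t1, t2, t3} : Finset (V2 r ⧸ F)) : Set (V2 r ⧸ F)) := by
      refine add_mem (add_mem (smul_mem _ _ (subset_span ?_)) (smul_mem _ _ (subset_span ?_)))
        (smul_mem _ _ (subset_span ?_)) <;> simp
    have hq0 : a • t1 + b • t2 + c • t3 ≠ 0 := by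
      intro h
      obtain ⟨ha, hb, hc⟩ := tc a b c h
      rcases habc with ⟨h1, h2⟩ | ⟨h1, h2⟩ | ⟨h1, h2⟩
      · exact one_ne_zero (h1 ▸ ha)
      · exact one_ne_zero (h1 ▸ ha)
      · exact one_ne_zero (h1 ▸ hb)
    have hqT : a • t1 + b • t2 + c • t3 ∉ ({t1, t2, t3} : Finset (V2 r ⧸ F)) := by
      intro hmem
      simp only [Finset.mem_insert, Finset.mem_singleton] at hmem
      rcases hmem with h | h | h
      · have h2 : (a + 1) • t1 + b • t2 + c • t3 = 0 := by
          have h3 : (a + 1) • t1 + b • t2 + c • t3 = (a • t1 + b • t2 + c • t3) + t1 := by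
            rw [add_smul, one_smul]; abel
          rw [h3, h, q_add_self]
        obtain ⟨-, hb, hc⟩ := tc (a + 1) b c h2
        rcases habc with ⟨h1, h4⟩ | ⟨h1, h4⟩ | ⟨h1, h4⟩
        · exact one_ne_zero (h4 ▸ hb)
        · exact one_ne_zero (h4 ▸ hc)
        · exact one_ne_zero (h4 ▸ hc)
      · have h2 : a • t1 + (b + 1) • t2 + c • t3 = 0 := by
          have h3 : a • t1 + (b + 1) • t2 + c • t3 = (a • t1 + b • t2 + c • t3) + t2 := by
            rw [add_smul, one_smul]; abel
          rw [h3, h, q_add_self]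
        obtain ⟨ha, -, hc⟩ := tc a (b + 1) c h2
        rcases habc with ⟨h1, h4⟩ | ⟨h1, h4⟩ | ⟨h1, h4⟩
        · exact one_ne_zero (h1 ▸ ha)
        · exact one_ne_zero (h1 ▸ ha)
        · exact one_ne_zero (h4 ▸ hc)
      · have h2 : a • t1 + b • t2 + (c + 1) • t3 = 0 := by
          have h3 : a • t1 + b • t2 + (c + 1) • t3 = (a • t1 + b • t2 + c • t3) + t3 := by
            rw [add_smul, one_smul]; abel
          rw [h3, h, q_add_self]
        obtain ⟨ha, hb, -⟩ := tc a b (c + 1) h2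
        rcases habc with ⟨h1, h4⟩ | ⟨h1, h4⟩ | ⟨h1, h4⟩
        · exact one_ne_zero (h1 ▸ ha)
        · exact one_ne_zero (h1 ▸ ha)
        · exact one_ne_zero (h1 ▸ hb)
    exact hnot _ hspan hqT hq0 e he heq
  -- distinctness of the five vectors
  have hne12 : e1 ≠ e2 := fun h => h12 (by rw [← he1t, ← he2t, h])
  have hne13 : e1 ≠ e3 := fun h => h13 (by rw [← he1t, ← he3t, h])
  have hne23 : e2 ≠ e3 := fun h => h23 (by rw [← he2t, ← he3t, h])
  have hne1x : e1 ≠ x := fun h => ht1ne (by rw [← he1t, h, hmkx])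
  have hne1y : e1 ≠ y := fun h => ht1ne (by rw [← he1t, h, hmky])
  have hne2x : e2 ≠ x := fun h => ht2ne (by rw [← he2t, h, hmkx])
  have hne2y : e2 ≠ y := fun h => ht2ne (by rw [← he2t, h, hmky])
  have hne3x : e3 ≠ x := fun h => ht3ne (by rw [← he3t, h, hmkx])
  have hne3y : e3 ≠ y := fun h => ht3ne (by rw [← he3t, h, hmky])
  -- the five element set
  have hS5coe : (({e1, e2, e3, x, y} : Finset (V2 r)) : Set (V2 r))
      = Set.range ![e1, e2, e3, x, y] := by
    rw [range5]; simp
  have hv5li : LinearIndependent (ZMod 2) ![e1, e2, e3, x, y] := by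
    rw [Fintype.linearIndependent_iff]
    intro g hg
    rw [Fin.sum_univ_five] at hg
    simp only [Matrix.cons_val_zero, Matrix.cons_val_one, Matrix.head_cons,
      Matrix.cons_val_two, Matrix.tail_cons, Matrix.cons_val_three,
      Matrix.cons_val_four, Matrix.head_fin_const] at hg
    have hq := congrArg F.mkQ hg
    simp only [map_add, map_smul, map_zero, he1t, he2t, he3t, hmkx, hmky,
      smul_zero, add_zero] at hq
    obtain ⟨ha, hb, hc⟩ := tc (g 0) (g 1) (g 2) hq
    rw [ha, hb, hc] at hg
    simp only [zero_smul, zero_add] at hg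
    have h34 : g 3 = 0 ∧ g 4 = 0 := by
      rcases zm2 (g 3) with h3 | h3 <;> rcases zm2 (g 4) with h4 | h4 <;>
        rw [h3, h4] at hg <;>
        simp only [zero_smul, one_smul, add_zero, zero_add] at hg
      · exact ⟨h3, h4⟩
      · exact absurd hg hyne0
      · exact absurd hg hxne0
      · exact absurd (v2_eq_of_add_eq_zero hg) hxy
    intro i
    fin_cases i <;> first | exact ha | exact hb | exact hc | exact h34.1 | exact h34.2
  -- nonmemberships needed for the span computation
  have hnxy : x + y ∉ E := hTF x hxE y hyE
  have hn1x : e1 + x ∉ E := hTF e1 he1E x hxE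
  have hn1y : e1 + y ∉ E := hTF e1 he1E y hyE
  have hn2x : e2 + x ∉ E := hTF e2 he2E x hxE
  have hn2y : e2 + y ∉ E := hTF e2 he2E y hyE
  have hn3x : e3 + x ∉ E := hTF e3 he3E x hxE
  have hn3y : e3 + y ∉ E := hTF e3 he3E y hyE
  have hn1xy : e1 + x + y ∉ E := by rw [add_assoc]; exact he1xy
  have hn2xy : e2 + x + y ∉ E := by rw [add_assoc]; exact he2xy
  have hn3xy : e3 + x + y ∉ E := by rw [add_assoc]; exact he3xy
  -- contradiction with I5-freeness
  refine hI5 ⟨{e1, e2, e3, x, y}, ?_, ?_, ?_⟩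
  · rw [Finset.card_insert_of_notMem (by simp [hne12, hne13, hne1x, hne1y]),
      Finset.card_insert_of_notMem (by simp [hne23, hne2x, hne2y]),
      Finset.card_insert_of_notMem (by simp [hne3x, hne3y]),
      Finset.card_insert_of_notMem (by simp [hxy]), Finset.card_singleton]
  · rw [hS5coe]
    exact (linearIndepOn_id_range_iff hv5li.injective).mpr hv5li
  · ext u
    constructor
    · rintro ⟨huE, huS⟩
      rw [hS5coe] at huS
      obtain ⟨c, hc⟩ := (mem_span_range_iff_exists_fun (ZMod 2)).mp huS
      rw [Fin.sum_univ_five] at hc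
      simp only [Matrix.cons_val_zero, Matrix.cons_val_one, Matrix.head_cons,
        Matrix.cons_val_two, Matrix.tail_cons, Matrix.cons_val_three,
        Matrix.cons_val_four, Matrix.head_fin_const] at hc
      have hmem : u ∈ ({e1, e2, e3, x, y} : Finset (V2 r)) → u ∈
          (({e1, e2, e3, x, y} : Finset (V2 r)) : Set (V2 r)) := Finset.mem_coe.mpr
      apply hmem
      simp only [Finset.mem_insert, Finset.mem_singleton]
      rcases zm2 (c 0) with h0c | h0c <;> rcases zm2 (c 1) with h1c | h1c <;>
        rcases zm2 (c 2) with h2c | h2c <;> rcases zm2 (c 3) with h3c | h3c <;>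
        rcases zm2 (c 4) with h4c | h4c <;>
        rw [h0c, h1c, h2c, h3c, h4c] at hc <;>
        simp only [zero_smul, one_smul, add_zero, zero_add] at hc <;>
        subst hc
      · exact absurd huE h0
      · exact Or.inr (Or.inr (Or.inr (Or.inr rfl)))
      · exact Or.inr (Or.inr (Or.inr (Or.inl rfl)))
      · exact absurd huE hnxy
      · exact Or.inr (Or.inr (Or.inl rfl))
      · exact absurd huE hn3y
      · exact absurd huE hn3x
      · exact absurd huE hn3xy
      · exact Or.inr (Or.inl rfl)
      · exact absurd huE hn2y
      · exact absurd huE hn2x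
      · exact absurd huE hn2xy
      · exact (tcontra 0 1 1 (Or.inr (Or.inr ⟨rfl, rfl⟩)) _ huE
          (by simp [map_add, he1t, he2t, he3t, hmkx, hmky])).elim
      · exact (tcontra 0 1 1 (Or.inr (Or.inr ⟨rfl, rfl⟩)) _ huE
          (by simp [map_add, he1t, he2t, he3t, hmkx, hmky])).elim
      · exact (tcontra 0 1 1 (Or.inr (Or.inr ⟨rfl, rfl⟩)) _ huE
          (by simp [map_add, he1t, he2t, he3t, hmkx, hmky])).elim
      · exact (tcontra 0 1 1 (Or.inr (Or.inr ⟨rfl, rfl⟩)) _ huE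
          (by simp [map_add, he1t, he2t, he3t, hmkx, hmky])).elim
      · exact Or.inl rfl
      · exact absurd huE hn1y
      · exact absurd huE hn1x
      · exact absurd huE hn1xy
      · exact (tcontra 1 0 1 (Or.inr (Or.inl ⟨rfl, rfl⟩)) _ huE
          (by simp [map_add, he1t, he2t, he3t, hmkx, hmky])).elim
      · exact (tcontra 1 0 1 (Or.inr (Or.inl ⟨rfl, rfl⟩)) _ huE
          (by simp [map_add, he1t, he2t, he3t, hmkx, hmky])).elim
      · exact (tcontra 1 0 1 (Or.inr (Or.inl ⟨rfl, rfl⟩)) _ huE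
          (by simp [map_add, he1t, he2t, he3t, hmkx, hmky])).elim
      · exact (tcontra 1 0 1 (Or.inr (Or.inl ⟨rfl, rfl⟩)) _ huE
          (by simp [map_add, he1t, he2t, he3t, hmkx, hmky])).elim
      · exact (tcontra 1 1 0 (Or.inl ⟨rfl, rfl⟩) _ huE
          (by simp [map_add, he1t, he2t, he3t, hmkx, hmky])).elim
      · exact (tcontra 1 1 0 (Or.inl ⟨rfl, rfl⟩) _ huE
          (by simp [map_add, he1t, he2t, he3t, hmkx, hmky])).elim
      · exact (tcontra 1 1 0 (Or.inl ⟨rfl, rfl⟩) _ huE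
          (by simp [map_add, he1t, he2t, he3t, hmkx, hmky])).elim
      · exact (tcontra 1 1 0 (Or.inl ⟨rfl, rfl⟩) _ huE
          (by simp [map_add, he1t, he2t, he3t, hmkx, hmky])).elim
      · exact (tcontra 1 1 1 (Or.inl ⟨rfl, rfl⟩) _ huE
          (by simp [map_add, he1t, he2t, he3t, hmkx, hmky])).elim
      · exact (tcontra 1 1 1 (Or.inl ⟨rfl, rfl⟩) _ huE
          (by simp [map_add, he1t, he2t, he3t, hmkx, hmky])).elim
      · exact (tcontra 1 1 1 (Or.inl ⟨rfl, rfl⟩) _ huE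
          (by simp [map_add, he1t, he2t, he3t, hmkx, hmky])).elim
      · exact (tcontra 1 1 1 (Or.inl ⟨rfl, rfl⟩) _ huE
          (by simp [map_add, he1t, he2t, he3t, hmkx, hmky])).elim
    · intro huS5
      refine ⟨?_, subset_span huS5⟩
      simp only [Finset.coe_insert, Finset.coe_singleton, Set.mem_insert_iff,
        Set.mem_singleton_iff] at huS5
      rcases huS5 with rfl | rfl | rfl | rfl | rfl
      exacts [he1E, he2E, he3E, hxE, hyE]
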